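/- Let X be a finite connected poset, F a field, and φ a Jordan automorphism of I(X,F) (a bijective F-linear map with φ(f²) = φ(f)² and φ(fgf) = φ(f)φ(g)φ(f) for all f, g) such that φ(e_x) = e_x for all x ∈ X. Then φ is a multiplicative automorphism of I(X,F): there exists σ: {(x,y) : x ≤ y} → F with σ(x,x) = 1, σ(x,y) ≠ 0 for all x ≤ y, and σ(x,y)σ(y,z) = σ(x,z) for all x ≤ y ≤ z, such that φ(f)(x,y) = σ(x,y) f(x,y) for all f ∈ I(X,F) and all x ≤ y. -/

import Mathlib

open IncidenceAlgebra

/-- A poset is connected if any two elements can be joined by a sequence of elements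
in which consecutive elements are comparable. -/
def PosetConnected (X : Type*) [PartialOrder X] : Prop :=
  ∀ x y : X, Relation.ReflTransGen (fun a b : X => a ≤ b ∨ b ≤ a) x y

/-- The standard basis element `e_{xy}` of the incidence algebra (for `x ≤ y`):
the function taking value `1` at `(x, y)` and `0` elsewhere. -/
def eSingle {R : Type*} [Zero R] [One R] {X : Type*} [PartialOrder X] [DecidableEq X]
    (x y : X) (hxy : x ≤ y) : IncidenceAlgebra R X where
  toFun u v := if u = x ∧ v = y then 1 else 0
  eq_zero_of_not_le' u v huv := by
    show (if u = x ∧ v = y then (1 : R) else 0) = 0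
    split_ifs with hc
    · obtain ⟨rfl, rfl⟩ := hc; exact absurd hxy huv
    · rfl

set_option linter.unusedSectionVars false

section Aux
variable {X : Type*} [PartialOrder X] [Fintype X] [LocallyFiniteOrder X] [DecidableEq X]
  [DecidableRel ((· ≤ ·) : X → X → Prop)] {F : Type*} [Field F]

lemma eSingle_apply (x y : X) (h : x ≤ y) (u v : X) :
    (eSingle x y h : IncidenceAlgebra F X) u v = if u = x ∧ v = y then 1 else 0 := rfl

lemma smul_apply' (c : F) (f : IncidenceAlgebra F X) (a b : X) :
    (c • f) a b = c * f a b := rfl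

lemma ex_mul (x : X) (g : IncidenceAlgebra F X) (a b : X) (hab : a ≤ b) :
    ((eSingle x x le_rfl : IncidenceAlgebra F X) * g) a b
      = if a = x then g x b else 0 := by
  rw [mul_apply]
  by_cases hax : a = x
  · subst hax
    rw [Finset.sum_eq_single_of_mem a (by simp [hab])]
    · simp [eSingle_apply]
    · intro w _ hw
      rw [eSingle_apply, if_neg fun hc => hw hc.2, zero_mul]
  · rw [if_neg hax]
    exact Finset.sum_eq_zero fun w _ => by
      rw [eSingle_apply, if_neg fun hc => hax hc.1, zero_mul]

lemma mul_ex (x : X) (g : IncidenceAlgebra F X) (a b : X) (hab : a ≤ b) :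
    (g * (eSingle x x le_rfl : IncidenceAlgebra F X)) a b
      = if b = x then g a x else 0 := by
  rw [mul_apply]
  by_cases hbx : b = x
  · subst hbx
    rw [Finset.sum_eq_single_of_mem b (by simp [hab])]
    · simp [eSingle_apply]
    · intro w _ hw
      rw [eSingle_apply, if_neg fun hc => hw hc.1, mul_zero]
  · rw [if_neg hbx]
    exact Finset.sum_eq_zero fun w _ => by
      rw [eSingle_apply (x := x), if_neg fun hc => hbx hc.2, mul_zero]

lemma single_mul_single {x y z : X} (hxy : x ≤ y) (hyz : y ≤ z) :
    (eSingle x y hxy : IncidenceAlgebra F X) * eSingle y z hyz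
      = eSingle x z (hxy.trans hyz) := by
  ext a b hab
  rw [mul_apply, eSingle_apply]
  by_cases hc : a = x ∧ b = z
  · obtain ⟨rfl, rfl⟩ := hc
    rw [Finset.sum_eq_single_of_mem y (by simp [hxy, hyz])]
    · simp [eSingle_apply]
    · intro w _ hw
      rw [eSingle_apply, if_neg fun hc => hw hc.2, zero_mul]
  · rw [if_neg hc]
    refine Finset.sum_eq_zero fun w _ => ?_
    simp only [eSingle_apply, ite_mul, one_mul, zero_mul]
    split_ifs with h1 h2 <;> try rfl
    exact absurd ⟨h1.1, h2.2⟩ hc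

lemma single_mul_single_zero {x y z w : X} (hxy : x ≤ y) (hzw : z ≤ w) (hne : y ≠ z) :
    (eSingle x y hxy : IncidenceAlgebra F X) * eSingle z w hzw = 0 := by
  ext a b _
  rw [mul_apply, IncidenceAlgebra.zero_apply]
  refine Finset.sum_eq_zero fun u _ => ?_
  simp only [eSingle_apply, ite_mul, one_mul, zero_mul]
  split_ifs with h1 h2 <;> try rfl
  exact absurd (h1.2.symm.trans h2.1) hne

/-- evaluation as an AddMonoidHom -/
def evalHom (a b : X) : IncidenceAlgebra F X →+ F where
  toFun f := f a b
  map_zero' := rfl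
  map_add' _ _ := rfl

lemma sum_eval {ι : Type*} (s : Finset ι) (g : ι → IncidenceAlgebra F X) (a b : X) :
    (∑ i ∈ s, g i) a b = ∑ i ∈ s, g i a b :=
  map_sum (evalHom a b) g s

lemma dsum_eval (c : ∀ u v : X, u ≤ v → F) (a b : X) (hab : a ≤ b) :
    (∑ u : X, ∑ v : X,
      if h : u ≤ v then c u v h • eSingle u v h else (0 : IncidenceAlgebra F X)) a b
      = c a b hab := by
  have hterm : ∀ u v : X,
      (if h : u ≤ v then c u v h • eSingle u v h else (0 : IncidenceAlgebra F X)) a b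
        = if h : u ≤ v then (if a = u ∧ b = v then c u v h else 0) else 0 := by
    intro u v
    by_cases h : u ≤ v
    · rw [dif_pos h, dif_pos h, smul_apply', eSingle_apply]
      by_cases hc : a = u ∧ b = v
      · rw [if_pos hc, if_pos hc, mul_one]
      · rw [if_neg hc, if_neg hc, mul_zero]
    · rw [dif_neg h, dif_neg h, IncidenceAlgebra.zero_apply]
  rw [sum_eval]
  rw [Finset.sum_congr rfl fun u _ => sum_eval Finset.univ _ a b]
  rw [Finset.sum_congr rfl fun u _ => Finset.sum_congr rfl fun v _ => hterm u v]
  rw [Finset.sum_eq_single_of_mem a (Finset.mem_univ a) (fun u _ hu =>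
    Finset.sum_eq_zero fun v _ => by
      by_cases h : u ≤ v
      · rw [dif_pos h, if_neg fun hc => hu hc.1.symm]
      · rw [dif_neg h])]
  rw [Finset.sum_eq_single_of_mem b (Finset.mem_univ b) (fun v _ hv => by
      by_cases h : a ≤ v
      · rw [dif_pos h, if_neg fun hc => hv hc.2.symm]
      · rw [dif_neg h])]
  rw [dif_pos hab, if_pos ⟨rfl, rfl⟩]

end Aux

/-- a Jordan automorphism of the incidence algebra of a finite connected poset
fixing all `e_x` is a multiplicative automorphism. -/
theorem stmt_8 {X : Type*} [PartialOrder X] [Fintype X] [LocallyFiniteOrder X] [DecidableEq X]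
    {F : Type*} [Field F]
    (hconn : PosetConnected X)
    (φ : IncidenceAlgebra F X →ₗ[F] IncidenceAlgebra F X)
    (hbij : Function.Bijective φ)
    (hsq : ∀ f : IncidenceAlgebra F X, φ (f * f) = φ f * φ f)
    (htriple : ∀ f g : IncidenceAlgebra F X, φ (f * g * f) = φ f * φ g * φ f)
    (hfix : ∀ x : X, φ (eSingle x x le_rfl) = eSingle x x le_rfl) :
    ∃ σ : X → X → F,
      (∀ x : X, σ x x = 1) ∧
      (∀ x y : X, x ≤ y → σ x y ≠ 0) ∧
      (∀ x y z : X, x ≤ y → y ≤ z → σ x y * σ y z = σ x z) ∧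
      (∀ (f : IncidenceAlgebra F X) (x y : X), x ≤ y → φ f x y = σ x y * f x y) := by
  classical
  -- linearized Jordan identity
  have jordan : ∀ f g : IncidenceAlgebra F X,
      φ (f * g) + φ (g * f) = φ f * φ g + φ g * φ f := by
    intro f g
    have h := hsq (f + g)
    simp only [add_mul, mul_add, map_add, hsq] at h
    have h2 : φ (f * f) + φ (g * g) + (φ (f * g) + φ (g * f))
        = φ (f * f) + φ (g * g) + (φ f * φ g + φ g * φ f) := by
      rw [hsq, hsq]
      abel_nf
      abel_nf at h
      linear_combination (norm := abel_nf) h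
    exact add_left_cancel h2
  -- key lemma: φ sends each e_{xy} to a scalar multiple of itself
  have key : ∀ (x y : X) (h : x ≤ y),
      φ (eSingle x y h) = (φ (eSingle x y h) x y) • eSingle x y h := by
    intro x y h
    by_cases hxy : x = y
    · subst hxy
      rw [hfix x, eSingle_apply, if_pos ⟨rfl, rfl⟩, one_smul]
    · set G := φ (eSingle x y h) with hG
      have eqx : G = eSingle x x le_rfl * G + G * eSingle x x le_rfl := by
        have hj := jordan (eSingle x x le_rfl) (eSingle x y h)
        rw [hfix x, single_mul_single le_rfl h,
          single_mul_single_zero h le_rfl (Ne.symm hxy), map_zero, add_zero] at hj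
        exact hj
      have eqy : G = eSingle y y le_rfl * G + G * eSingle y y le_rfl := by
        have hj := jordan (eSingle x y h) (eSingle y y le_rfl)
        rw [hfix y, single_mul_single h le_rfl,
          single_mul_single_zero le_rfl h (Ne.symm hxy), map_zero, add_zero] at hj
        rw [hG]
        conv_lhs => rw [hj]
        exact add_comm _ _
      have h1 : ∀ u v : X, u ≤ v →
          G u v = (if u = x then G x v else 0) + (if v = x then G u x else 0) := by
        intro u v huv
        conv_lhs => rw [eqx]
        rw [IncidenceAlgebra.add_apply, ex_mul _ _ _ _ huv, mul_ex _ _ _ _ huv]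
      have h2 : ∀ u v : X, u ≤ v →
          G u v = (if u = y then G y v else 0) + (if v = y then G u y else 0) := by
        intro u v huv
        conv_lhs => rw [eqy]
        rw [IncidenceAlgebra.add_apply, ex_mul _ _ _ _ huv, mul_ex _ _ _ _ huv]
      ext a b hab
      rw [smul_apply', eSingle_apply]
      by_cases hc : a = x ∧ b = y
      · obtain ⟨rfl, rfl⟩ := hc
        rw [if_pos ⟨rfl, rfl⟩, mul_one]
      · rw [if_neg hc, mul_zero]
        by_cases hax : a = x
        · subst hax
          by_cases hbx : b = a
          · subst hbx
            have e1 := h1 b b le_rfl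
            rw [if_pos rfl] at e1
            linear_combination -e1
          · have hby : b ≠ y := fun hb => hc ⟨rfl, hb⟩
            have e2 := h2 a b hab
            rwa [if_neg hxy, if_neg hby, add_zero] at e2
        · by_cases hbx : b = x
          · subst hbx
            have hay : a ≠ y := fun ha =>
              hax (le_antisymm hab (ha ▸ h))
            have hby : b ≠ y := hxy
            have e2 := h2 a b hab
            rwa [if_neg hay, if_neg hby, add_zero] at e2
          · have e1 := h1 a b hab
            rwa [if_neg hax, if_neg hbx, add_zero] at e1
  -- decomposition of an arbitrary element into basis elements
  have hdecomp : ∀ f : IncidenceAlgebra F X,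
      f = ∑ u : X, ∑ v : X,
        if h : u ≤ v then f u v • eSingle u v h else (0 : IncidenceAlgebra F X) := by
    intro f
    ext a b hab
    exact (dsum_eval (fun u v _ => f u v) a b hab).symm
  refine ⟨fun x y => if h : x ≤ y then φ (eSingle x y h) x y else 1, ?_, ?_, ?_, ?_⟩
  · intro x
    dsimp only
    rw [dif_pos le_rfl, hfix x, eSingle_apply, if_pos ⟨rfl, rfl⟩]
  · intro x y hxy hzero
    dsimp only at hzero
    rw [dif_pos hxy] at hzero
    have hk := key x y hxy
    rw [hzero, zero_smul] at hk
    have h0 : eSingle x y hxy = (0 : IncidenceAlgebra F X) :=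
      hbij.1 (by rw [map_zero]; exact hk)
    have h1 : (eSingle x y hxy : IncidenceAlgebra F X) x y = 0 := by
      rw [h0]; rfl
    rw [eSingle_apply, if_pos ⟨rfl, rfl⟩] at h1
    exact one_ne_zero h1
  · intro x y z hxy hyz
    dsimp only
    rw [dif_pos hxy, dif_pos hyz, dif_pos (hxy.trans hyz)]
    by_cases hxy' : x = y
    · subst hxy'
      rw [hfix x, eSingle_apply, if_pos ⟨rfl, rfl⟩, one_mul]
    · by_cases hyz' : y = z
      · subst hyz'
        rw [hfix y, eSingle_apply, if_pos ⟨rfl, rfl⟩, mul_one]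
      · have hxz' : x ≠ z := fun hh => hxy' (le_antisymm hxy (hh ▸ hyz))
        have hz : (eSingle y z hyz : IncidenceAlgebra F X) * eSingle x y hxy = 0 :=
          single_mul_single_zero hyz hxy (Ne.symm hxz')
        have hj := jordan (eSingle x y hxy) (eSingle y z hyz)
        rw [single_mul_single hxy hyz, hz, map_zero, add_zero,
          key x y hxy, key y z hyz] at hj
        simp only [smul_mul_assoc, mul_smul_comm, smul_smul] at hj
        rw [single_mul_single hxy hyz, hz, smul_zero, add_zero] at hj
        have hv : φ (eSingle x z (hxy.trans hyz)) x z
            = ((φ (eSingle y z hyz) y z * φ (eSingle x y hxy) x y) •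
                (eSingle x z (hxy.trans hyz) : IncidenceAlgebra F X)) x z := by
          rw [hj]
        rw [smul_apply', eSingle_apply, if_pos ⟨rfl, rfl⟩, mul_one] at hv
        rw [hv]; exact mul_comm _ _
  · intro f x y hxy
    dsimp only
    conv_lhs => rw [hdecomp f]
    rw [map_sum]
    rw [Finset.sum_congr rfl fun u _ => map_sum φ _ Finset.univ]
    have hφterm : ∀ u v : X,
        φ (if h : u ≤ v then f u v • eSingle u v h else (0 : IncidenceAlgebra F X))
          = if h : u ≤ v then (f u v * φ (eSingle u v h) u v) • eSingle u v h
            else (0 : IncidenceAlgebra F X) := by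
      intro u v
      by_cases h : u ≤ v
      · rw [dif_pos h, dif_pos h, map_smul]
        conv_lhs => rw [key u v h]
        rw [smul_smul]
      · rw [dif_neg h, dif_neg h, map_zero]
    rw [Finset.sum_congr rfl fun u _ => Finset.sum_congr rfl fun v _ => hφterm u v]
    rw [dsum_eval (fun u v h => f u v * φ (eSingle u v h) u v) x y hxy]
    rw [dif_pos hxy, mul_comm]
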